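/- arXiv:1706.07900 — 3 statements merged into one kernel-verified Lean document; each statement's English description precedes it below -/
import Mathlib

section
/- Let G be a finite simple graph on vertex set V and let S ⊆ V be a set of vertices with V ∖ S nonempty. Then Break(G, S) is a tree (connected and acyclic) if and only if S is an independent set of G (no two vertices of S are adjacent) and the subgraph of G induced on V ∖ S is a tree. -/
/-- The graph obtained from `G` by breaking every vertex in `S`:
each `s ∈ S` of degree `k` is replaced by `k` new degree-1 vertices,
one attached to each former neighbor of `s`. -/
def SimpleGraph.Break {V : Type*} (G : SimpleGraph V) (S : Set V) :
    SimpleGraph ((Sᶜ : Set V) ⊕ {p : V × V // p.1 ∈ S ∧ G.Adj p.1 p.2}) where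
  Adj x y :=
    match x, y with
    | Sum.inl x, Sum.inl y => G.Adj x y
    | Sum.inl x, Sum.inr p => p.1.2 = (x : V)
    | Sum.inr p, Sum.inl x => p.1.2 = (x : V)
    | Sum.inr p, Sum.inr q => p.1.2 = q.1.1 ∧ q.1.2 = p.1.1
  symm := by
    constructor
    rintro (x | p) (y | q) h
    · exact h.symm
    · exact h
    · exact h
    · exact ⟨h.2, h.1⟩
  loopless := by
    constructor
    rintro (x | p) h
    · exact G.ne_of_adj h rfl
    · exact G.ne_of_adj p.2.2 h.1.symm

namespace BreakAux

open SimpleGraph Sum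

variable {V : Type*} {G : SimpleGraph V} {S : Set V}

/-- The inclusion hom from the induced graph to the broken graph. -/
def ι (G : SimpleGraph V) (S : Set V) : G.induce Sᶜ →g G.Break S where
  toFun := Sum.inl
  map_rel' := fun h => h

lemma ι_injective : Function.Injective (ι G S) := fun _ _ h => Sum.inl_injective h

lemma adj_inl_inl {x y : (Sᶜ : Set V)} :
    (G.Break S).Adj (inl x) (inl y) ↔ G.Adj x y := Iff.rfl

/-- Any edge of a nontrivial walk contains an edge into its endpoint. -/
lemma exists_edge_end {α : Type*} {H : SimpleGraph α} :
    ∀ {u v : α} (w : H.Walk u v), u ≠ v → ∃ x, H.Adj x v ∧ s(x, v) ∈ w.edges := by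
  intro u v w
  induction w with
  | nil => intro h; exact absurd rfl h
  | @cons a b c h w ih =>
    intro _
    by_cases hbc : b = c
    · subst hbc
      exact ⟨a, h, by simp⟩
    · obtain ⟨x, hx, hmem⟩ := ih hbc
      exact ⟨x, hx, by simp [hmem]⟩

section Indep

lemma snd_mem_compl (hS : ∀ a ∈ S, ∀ b ∈ S, ¬ G.Adj a b)
    (p : {p : V × V // p.1 ∈ S ∧ G.Adj p.1 p.2}) : p.1.2 ∈ Sᶜ :=
  fun h => hS _ p.2.1 _ h p.2.2

lemma adj_inr (hS : ∀ a ∈ S, ∀ b ∈ S, ¬ G.Adj a b)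
    {p : {p : V × V // p.1 ∈ S ∧ G.Adj p.1 p.2}}
    {y : (Sᶜ : Set V) ⊕ {p : V × V // p.1 ∈ S ∧ G.Adj p.1 p.2}}
    (h : (G.Break S).Adj (Sum.inr p) y) :
    y = Sum.inl ⟨p.1.2, snd_mem_compl hS p⟩ := by
  cases y with
  | inl z =>
    have : p.1.2 = (z : V) := h
    congr 1
    exact Subtype.ext this.symm
  | inr q =>
    have h1 : p.1.2 = q.1.1 := h.1
    exact absurd p.2.2 (hS _ p.2.1 _ (h1 ▸ q.2.1))

/-- project a vertex of the broken graph to the induced graph -/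
def base (hS : ∀ a ∈ S, ∀ b ∈ S, ¬ G.Adj a b) :
    ((Sᶜ : Set V) ⊕ {p : V × V // p.1 ∈ S ∧ G.Adj p.1 p.2}) → (Sᶜ : Set V)
  | Sum.inl x => x
  | Sum.inr p => ⟨p.1.2, snd_mem_compl hS p⟩

lemma reach_base_of_adj (hS : ∀ a ∈ S, ∀ b ∈ S, ¬ G.Adj a b)
    {u v : (Sᶜ : Set V) ⊕ {p : V × V // p.1 ∈ S ∧ G.Adj p.1 p.2}}
    (h : (G.Break S).Adj u v) :
    (G.induce Sᶜ).Reachable (base hS u) (base hS v) := by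
  cases u with
  | inl x =>
    cases v with
    | inl y => exact SimpleGraph.Adj.reachable (show (G.induce Sᶜ).Adj x y from h)
    | inr p =>
      have h1 : p.1.2 = (x : V) := h
      rw [show (base hS (inl x)) = base hS (inr p) from Subtype.ext h1.symm]
  | inr p =>
    cases v with
    | inl y =>
      have h1 : p.1.2 = (y : V) := h
      rw [show (base hS (inr p)) = base hS (inl y) from Subtype.ext h1]
    | inr q =>
      exact absurd (h.1 ▸ q.2.1) (snd_mem_compl hS p)

lemma reach_base (hS : ∀ a ∈ S, ∀ b ∈ S, ¬ G.Adj a b)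
    {u v : (Sᶜ : Set V) ⊕ {p : V × V // p.1 ∈ S ∧ G.Adj p.1 p.2}}
    (w : (G.Break S).Walk u v) :
    (G.induce Sᶜ).Reachable (base hS u) (base hS v) := by
  induction w with
  | nil => exact Reachable.refl _
  | cons h _ ih => exact (reach_base_of_adj hS h).trans ih

lemma reach_to_base (hS : ∀ a ∈ S, ∀ b ∈ S, ¬ G.Adj a b)
    (u : (Sᶜ : Set V) ⊕ {p : V × V // p.1 ∈ S ∧ G.Adj p.1 p.2}) :
    (G.Break S).Reachable u (inl (base hS u)) := by
  cases u with
  | inl x => exact Reachable.refl _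
  | inr p => exact (show (G.Break S).Adj (inr p) (inl (base hS (inr p))) from rfl).reachable

lemma connected_iff (hS : ∀ a ∈ S, ∀ b ∈ S, ¬ G.Adj a b) (hne : (Sᶜ : Set V).Nonempty) :
    (G.Break S).Connected ↔ (G.induce Sᶜ).Connected := by
  constructor
  · intro h
    have : Nonempty (Sᶜ : Set V) := ⟨⟨hne.choose, hne.choose_spec⟩⟩
    refine ⟨fun x y => ?_⟩
    obtain ⟨w⟩ := h.preconnected (inl x) (inl y)
    exact reach_base hS w
  · intro h
    have : Nonempty ((Sᶜ : Set V) ⊕ {p : V × V // p.1 ∈ S ∧ G.Adj p.1 p.2}) :=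
      ⟨inl ⟨hne.choose, hne.choose_spec⟩⟩
    refine ⟨fun u v => ?_⟩
    refine (reach_to_base hS u).trans (Reachable.trans ?_ (reach_to_base hS v).symm)
    exact (h.preconnected (base hS u) (base hS v)).map (ι G S)

lemma no_cycle_at_inr (hS : ∀ a ∈ S, ∀ b ∈ S, ¬ G.Adj a b)
    (p : {p : V × V // p.1 ∈ S ∧ G.Adj p.1 p.2})
    (c : (G.Break S).Walk (inr p) (inr p)) : ¬ c.IsCycle := by
  intro hc
  cases c with
  | nil => exact hc.ne_nil rfl
  | @cons _ u _ h rest =>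
    obtain rfl := adj_inr hS h
    obtain ⟨x, hx, hmem⟩ := exists_edge_end rest (by simp)
    obtain rfl := adj_inr hS hx.symm
    have hnodup := hc.edges_nodup
    rw [SimpleGraph.Walk.edges_cons] at hnodup
    exact (List.nodup_cons.mp hnodup).1 (by rwa [Sym2.eq_swap] at hmem)

lemma all_left_of_isCycle (hS : ∀ a ∈ S, ∀ b ∈ S, ¬ G.Adj a b)
    {v : (Sᶜ : Set V) ⊕ {p : V × V // p.1 ∈ S ∧ G.Adj p.1 p.2}}
    {c : (G.Break S).Walk v v} (hc : c.IsCycle) :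
    ∀ u ∈ c.support, ∃ x, u = inl x := by
  classical
  intro u hu
  cases u with
  | inl x => exact ⟨x, rfl⟩
  | inr p => exact absurd (hc.rotate hu) (no_cycle_at_inr hS p _)

lemma pull {u v : (Sᶜ : Set V) ⊕ {p : V × V // p.1 ∈ S ∧ G.Adj p.1 p.2}}
    (w : (G.Break S).Walk u v) :
    ∀ (_ : ∀ z ∈ w.support, ∃ x, z = inl x) {x y : (Sᶜ : Set V)}
      (hu : u = inl x) (hv : v = inl y),
      ∃ w' : (G.induce Sᶜ).Walk x y, w'.map (ι G S) = w.copy hu hv := by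
  induction w with
  | nil =>
    intro _ x y hu hv
    subst hu
    obtain rfl : x = y := Sum.inl_injective hv
    exact ⟨SimpleGraph.Walk.nil, by simp; rfl⟩
  | @cons a b c h w ih =>
    intro hleft x y hu hv
    subst hu hv
    obtain ⟨x', rfl⟩ := hleft b (by simp)
    obtain ⟨w', hw'⟩ := ih (fun z hz => hleft z (by simp [hz])) rfl rfl
    refine ⟨SimpleGraph.Walk.cons (show (G.induce Sᶜ).Adj x x' from h) w', ?_⟩
    simp only [SimpleGraph.Walk.map_cons, SimpleGraph.Walk.copy_rfl_rfl] at hw' ⊢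
    rw [hw']
    rfl

lemma isAcyclic_iff (hS : ∀ a ∈ S, ∀ b ∈ S, ¬ G.Adj a b) :
    (G.Break S).IsAcyclic ↔ (G.induce Sᶜ).IsAcyclic := by
  constructor
  · intro hA x c hc
    exact hA _ (hc.map (f := ι G S) ι_injective)
  · intro hA v c hc
    obtain ⟨x, rfl⟩ := all_left_of_isCycle hS hc v c.start_mem_support
    obtain ⟨w', hw'⟩ := pull c (all_left_of_isCycle hS hc) rfl rfl
    rw [SimpleGraph.Walk.copy_rfl_rfl] at hw'
    have hmc : (w'.map (ι G S)).IsCycle := by rw [hw']; exact hc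
    exact hA w' ((SimpleGraph.Walk.map_isCycle_iff_of_injective ι_injective).mp hmc)

end Indep

lemma indep_of_connected (hne : (Sᶜ : Set V).Nonempty) (h : (G.Break S).Connected) :
    ∀ a ∈ S, ∀ b ∈ S, ¬ G.Adj a b := by
  intro a ha b hb hab
  set p : {p : V × V // p.1 ∈ S ∧ G.Adj p.1 p.2} := ⟨(a, b), ha, hab⟩ with hp
  set q : {p : V × V // p.1 ∈ S ∧ G.Adj p.1 p.2} := ⟨(b, a), hb, hab.symm⟩ with hq
  -- the set {inr p, inr q} is closed under adjacency
  have hclosed : ∀ u w : (Sᶜ : Set V) ⊕ {p : V × V // p.1 ∈ S ∧ G.Adj p.1 p.2},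
      (G.Break S).Adj u w → (w = inr p ∨ w = inr q) → (u = inr p ∨ u = inr q) := by
    rintro u w hadj (rfl | rfl)
    · cases u with
      | inl z =>
        have h1 : p.1.2 = (z : V) := hadj.symm
        have h2 : (z : V) ∈ Sᶜ := z.2
        rw [← h1] at h2
        exact (h2 hb).elim
      | inr r =>
        right
        have h1 : r.1.2 = a := hadj.1
        have h2 : b = r.1.1 := hadj.2
        exact congrArg Sum.inr (Subtype.ext (Prod.ext h2.symm h1))
    · cases u with
      | inl z =>
        have h1 : q.1.2 = (z : V) := hadj.symm
        have h2 : (z : V) ∈ Sᶜ := z.2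
        rw [← h1] at h2
        exact (h2 ha).elim
      | inr r =>
        left
        have h1 : r.1.2 = b := hadj.1
        have h2 : a = r.1.1 := hadj.2
        exact congrArg Sum.inr (Subtype.ext (Prod.ext h2.symm h1))
  have hwalk : ∀ (u w : (Sᶜ : Set V) ⊕ {p : V × V // p.1 ∈ S ∧ G.Adj p.1 p.2})
      (_ : (G.Break S).Walk u w), (w = inr p ∨ w = inr q) → (u = inr p ∨ u = inr q) := by
    intro u w wk
    induction wk with
    | nil => exact id
    | cons hadj _ ih => exact fun hw => hclosed _ _ hadj (ih hw)
  obtain ⟨wk⟩ := h.preconnected (inl ⟨hne.choose, hne.choose_spec⟩) (inr p)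
  rcases hwalk _ _ wk (Or.inl rfl) with h' | h' <;> simp at h'

end BreakAux

theorem break_isTree_iff_independent_and_induce_isTree {V : Type*} [Fintype V]
    (G : SimpleGraph V) (S : Set V) (hne : (Sᶜ : Set V).Nonempty) :
    (G.Break S).IsTree ↔
      (∀ a ∈ S, ∀ b ∈ S, ¬ G.Adj a b) ∧ (G.induce Sᶜ).IsTree := by
  constructor
  · intro hT
    have hS := BreakAux.indep_of_connected hne hT.isConnected
    exact ⟨hS, ⟨(BreakAux.connected_iff hS hne).mp hT.isConnected,
      (BreakAux.isAcyclic_iff hS).mp hT.IsAcyclic⟩⟩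
  · rintro ⟨hS, hT⟩
    exact ⟨(BreakAux.connected_iff hS hne).mpr hT.isConnected,
      (BreakAux.isAcyclic_iff hS).mpr hT.IsAcyclic⟩
end

section
/- Let V be a finite type with at least 3 elements, let A : V → V → Prop be a directed graph on V, and let u, v ∈ V be distinct with A u v. Then the number of Hamiltonian cycles σ of (V, A) satisfying σ u = v equals the number of Hamiltonian cycles of the simplification of (V, A) over the edge (u, v). In particular, Hamiltonian cycles of the simplified graph are in bijection with Hamiltonian cycles of (V, A) that use the edge (u, v). -/
/-- A Hamiltonian cycle of the directed graph `(V, A)` is a permutation of `V`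
that is a single cycle with full support and follows the edge relation `A`. -/
def IsHamiltonianCycle {V : Type*} [Fintype V] [DecidableEq V]
    (A : V → V → Prop) (σ : Equiv.Perm V) : Prop :=
  σ.IsCycle ∧ σ.support = Finset.univ ∧ ∀ w, A w (σ w)

/-- The simplification of the directed graph `(V, A)` over the edge `(u, v)`:
remove all edges out of `u` and into `v`, then contract `(u, v)`; the merged
vertex (represented by `u`) inherits the in-edges of `u` and out-edges of `v`. -/
def Simplify {V : Type*} (A : V → V → Prop) (u v : V) :
    {x : V // x ≠ v} → {x : V // x ≠ v} → Prop :=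
  fun x y =>
    ((x : V) = u → A v (y : V)) ∧ ((x : V) ≠ u → A (x : V) (y : V))

open Equiv Equiv.Perm Finset

section Aux

variable {V : Type*} [Fintype V] [DecidableEq V]

/-- `subtypePerm` preserves cycle-ness in both directions, when `f` fixes
everything outside the predicate. -/
lemma subtypePerm_isCycle_iff {p : V → Prop} [DecidablePred p] {f : Perm V}
    (h : ∀ x, p (f x) ↔ p x) (hfix : ∀ x, f x ≠ x → p x) :
    (f.subtypePerm h).IsCycle ↔ f.IsCycle := by
  constructor
  · rintro ⟨x, hx, hsc⟩
    refine ⟨x.1, fun hh => hx (Subtype.ext (by simpa [subtypePerm_apply] using hh)), ?_⟩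
    · intro y hy
      obtain ⟨i, hi⟩ := hsc (y := ⟨y, hfix y hy⟩)
        (fun hh => hy (by simpa [subtypePerm_apply, Subtype.ext_iff] using hh))
      rw [subtypePerm_zpow] at hi
      exact ⟨i, by simpa [subtypePerm_apply, Subtype.ext_iff] using hi⟩
  · rintro ⟨x, hx, hsc⟩
    refine ⟨⟨x, hfix x hx⟩, fun hh => hx (by simpa [subtypePerm_apply, Subtype.ext_iff] using hh),
      ?_⟩
    rintro ⟨y, py⟩ hy
    have hy' : f y ≠ y := fun e => hy (Subtype.ext (by simpa [subtypePerm_apply] using e))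
    obtain ⟨i, hi⟩ := hsc hy'
    exact ⟨i, by rw [subtypePerm_zpow]; exact Subtype.ext (by simpa [subtypePerm_apply] using hi)⟩

lemma forward_cycle {σ : Perm V} {u v : V} (hc : σ.IsCycle) (hs : σ.support = Finset.univ)
    (huv : u ≠ v) (hσu : σ u = v) (h3 : 3 ≤ Fintype.card V) :
    (σ * Equiv.swap u v).IsCycle ∧
      (σ * Equiv.swap u v).support = Finset.univ \ {v} := by
  have hmem : ∀ x : V, σ x ≠ x := fun x => mem_support.mp (by rw [hs]; exact mem_univ x)
  have hσv : σ v ≠ v := hmem v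
  have hσσv : σ (σ v) ≠ v := by
    intro h
    have h1 : σ v = u := σ.injective (by rw [h, hσu])
    have h2 : (σ ^ 2) u = u := by
      have : σ (σ u) = u := by rw [hσu, h1]
      simpa [pow_succ, mul_apply] using this
    have h4 : σ ^ 2 = 1 := (hc.pow_eq_one_iff' (x := u) (by rw [hσu]; exact Ne.symm huv)).2 h2
    have hd := orderOf_dvd_of_pow_eq_one h4
    rw [hc.orderOf, hs, Finset.card_univ] at hd
    have := Nat.le_of_dvd (by norm_num) hd
    omega
  have key : σ * Equiv.swap u v = Equiv.swap v (σ v) * σ := by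
    ext x
    simp only [mul_apply]
    rcases eq_or_ne x u with rfl | hxu
    · rw [swap_apply_left, hσu, swap_apply_left]
    rcases eq_or_ne x v with rfl | hxv
    · rw [swap_apply_right, hσu, swap_apply_right]
    · rw [swap_apply_of_ne_of_ne hxu hxv,
        swap_apply_of_ne_of_ne (fun h => hxu (σ.injective (h.trans hσu.symm)))
          (fun h => hxv (σ.injective h))]
  constructor
  · rw [key]; exact hc.swap_mul hσv hσσv
  · rw [key, support_swap_mul_eq σ v hσσv, hs]

lemma reverse_cycle {π : Perm V} {u v : V} (hc : π.IsCycle)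
    (hs : π.support = Finset.univ \ {v}) (huv : u ≠ v) :
    (π * Equiv.swap u v).IsCycle ∧ (π * Equiv.swap u v).support = Finset.univ := by
  set σ := π * Equiv.swap u v with hσdef
  have hπv : π v = v := by
    have : v ∉ π.support := by rw [hs]; simp
    exact notMem_support.mp this
  have hπu : π u ≠ u := mem_support.mp (by rw [hs]; simp [huv])
  have hπnev : ∀ x, x ≠ v → π x ≠ v := fun x hx h =>
    hx (π.injective (h.trans hπv.symm))
  have hσu : σ u = v := by simp [hσdef, mul_apply, swap_apply_left, hπv]
  have hσv : σ v = π u := by simp [hσdef, mul_apply, swap_apply_right]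
  have hx : ∀ x, x ≠ u → x ≠ v → σ x = π x := fun x h1 h2 => by
    simp [hσdef, mul_apply, swap_apply_of_ne_of_ne h1 h2]
  have hfixpow : ∀ j : ℕ, (π ^ j) v = v := by
    intro j
    induction j with
    | zero => simp
    | succ n ih => rw [pow_succ, mul_apply, hπv, ih]
  have hpow : ∀ j : ℕ, (π ^ j) u ≠ v := fun j h =>
    huv ((π ^ j).injective (h.trans (hfixpow j).symm))
  have hmoves : ∀ y, σ y ≠ y := by
    intro y
    rcases eq_or_ne y u with rfl | h1
    · rw [hσu]; exact Ne.symm huv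
    rcases eq_or_ne y v with rfl | h2
    · rw [hσv]; exact fun h => huv (π.injective (h.trans hπv.symm))
    · rw [hx y h1 h2]; exact mem_support.mp (by rw [hs]; simp [h2])
  have hσv' : σ v ≠ v := hmoves v
  have claim : ∀ j : ℕ, σ.SameCycle u ((π ^ j) u) := by
    intro j
    induction j with
    | zero => simpa using Equiv.Perm.SameCycle.refl σ u
    | succ n ih =>
      rcases eq_or_ne ((π ^ n) u) u with h | h
      · refine ⟨2, ?_⟩
        have h0 : σ (σ u) = π u := by rw [hσu, hσv]
        have h2 : (σ ^ (2 : ℤ)) u = π u := by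
          rw [show (2 : ℤ) = 1 + 1 by norm_num, zpow_add, zpow_one, mul_apply, h0]
        rw [pow_succ', mul_apply, h, h2]
      · have step : σ.SameCycle ((π ^ n) u) ((π ^ (n + 1)) u) := by
          refine ⟨1, ?_⟩
          rw [zpow_one, hx _ h (hpow n), pow_succ', mul_apply]
        exact ih.trans step
  constructor
  · refine ⟨u, by rw [hσu]; exact Ne.symm huv, ?_⟩
    intro y hy
    rcases eq_or_ne y v with rfl | h2
    · exact ⟨1, by simpa using hσu⟩
    rcases eq_or_ne y u with rfl | h1
    · exact Equiv.Perm.SameCycle.refl _ _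
    · have hπy : π y ≠ y := mem_support.mp (by rw [hs]; simp [h2])
      obtain ⟨i, hi⟩ := hc.exists_pow_eq hπu hπy
      exact hi ▸ claim i
  · ext y; simp [mem_support, hmoves y]

variable {A : V → V → Prop} {u v : V}

lemma key_iff {σ : Perm V} (huv : u ≠ v) (hσu : σ u = v) :
    ∀ x : V, (σ * Equiv.swap u v) x ≠ v ↔ x ≠ v := by
  intro x
  have h : (σ * Equiv.swap u v) x = v ↔ x = v := by
    rw [mul_apply]
    constructor
    · intro h
      have h2 : Equiv.swap u v x = u := σ.injective (h.trans hσu.symm)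
      exact (Equiv.swap u v).injective (h2.trans (Equiv.swap_apply_right u v).symm)
    · rintro rfl
      rw [Equiv.swap_apply_right]; exact hσu
  exact not_congr h

lemma fwd_ham (huv : u ≠ v) (h3 : 3 ≤ Fintype.card V)
    {σ : Perm V} (h : IsHamiltonianCycle A σ) (hσu : σ u = v) :
    IsHamiltonianCycle (Simplify A u v)
      ((σ * Equiv.swap u v).subtypePerm (key_iff huv hσu)) := by
  obtain ⟨hc, hs, he⟩ := h
  obtain ⟨hc', hs'⟩ := forward_cycle hc hs huv hσu h3
  refine ⟨?_, ?_, ?_⟩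
  · rw [subtypePerm_isCycle_iff _ ?_]
    · exact hc'
    · intro x hx
      intro hxv; subst hxv
      apply hx
      rw [mul_apply, Equiv.swap_apply_right, hσu]
  · ext ⟨x, hxv⟩
    simp only [Finset.mem_univ, iff_true, mem_support, ne_eq, subtypePerm_apply,
      Subtype.ext_iff]
    have : x ∈ (σ * Equiv.swap u v).support := by rw [hs']; simp [hxv]
    exact mem_support.mp this
  · rintro ⟨x, hxv⟩
    constructor
    · rintro hxu
      have hxu' : x = u := hxu
      simp only [subtypePerm_apply, mul_apply]
      rw [hxu', Equiv.swap_apply_left]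
      exact he v
    · intro hxu
      have hxu' : x ≠ u := hxu
      simp only [subtypePerm_apply, mul_apply]
      rw [Equiv.swap_apply_of_ne_of_ne hxu' hxv]
      exact he x

lemma bwd_ham (huv : u ≠ v) (hA : A u v)
    {τ : Perm {x : V // x ≠ v}} (h : IsHamiltonianCycle (Simplify A u v) τ) :
    IsHamiltonianCycle A (Equiv.Perm.ofSubtype τ * Equiv.swap u v) ∧
      (Equiv.Perm.ofSubtype τ * Equiv.swap u v) u = v := by
  obtain ⟨hc, hs, he⟩ := h
  set π := Equiv.Perm.ofSubtype τ with hπdef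
  have hπv : π v = v := Equiv.Perm.ofSubtype_apply_of_not_mem τ (by simp)
  have hπx : ∀ x (hx : x ≠ v), π x = (τ ⟨x, hx⟩ : V) := fun x hx =>
    Equiv.Perm.ofSubtype_apply_of_mem τ hx
  have hπs : π.support = Finset.univ \ {v} := by
    ext x
    simp only [mem_support, Finset.mem_sdiff, Finset.mem_univ, true_and,
      Finset.mem_singleton]
    constructor
    · intro hx
      intro hxv; subst hxv; exact hx hπv
    · intro hxv
      rw [hπx x hxv]
      intro hcontra
      have : τ ⟨x, hxv⟩ = ⟨x, hxv⟩ := Subtype.ext hcontra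
      have hmem : (⟨x, hxv⟩ : {x : V // x ≠ v}) ∈ τ.support := by
        rw [hs]; exact Finset.mem_univ _
      exact (mem_support.mp hmem) this
  have hfix : ∀ x, π x ≠ x → x ≠ v := by
    intro x hx hxv; subst hxv; exact hx hπv
  have hπc : π.IsCycle := by
    rw [← subtypePerm_isCycle_iff (Equiv.Perm.ofSubtype_apply_mem_iff_mem τ) hfix]
    rw [Equiv.Perm.subtypePerm_ofSubtype]
    exact hc
  obtain ⟨hc', hs'⟩ := reverse_cycle hπc hπs huv
  have hσu : (π * Equiv.swap u v) u = v := by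
    rw [mul_apply, Equiv.swap_apply_left, hπv]
  refine ⟨⟨hc', hs', ?_⟩, hσu⟩
  intro w
  rcases eq_or_ne w u with rfl | h1
  · rw [hσu]; exact hA
  rcases eq_or_ne w v with rfl | h2
  · rw [mul_apply, Equiv.swap_apply_right, hπx u huv]
    exact (he ⟨u, huv⟩).1 rfl
  · rw [mul_apply, Equiv.swap_apply_of_ne_of_ne h1 h2, hπx w h2]
    exact (he ⟨w, h2⟩).2 h1

end Aux

theorem card_hamiltonianCycles_simplify {V : Type*} [Fintype V] [DecidableEq V]
    (A : V → V → Prop) (u v : V) (huv : u ≠ v) (hA : A u v)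
    (h3 : 3 ≤ Fintype.card V) :
    Nat.card {σ : Equiv.Perm V // IsHamiltonianCycle A σ ∧ σ u = v} =
      Nat.card {τ : Equiv.Perm {x : V // x ≠ v} //
        IsHamiltonianCycle (Simplify A u v) τ} := by
  refine Nat.card_congr
    { toFun := fun s => ⟨(s.1 * Equiv.swap u v).subtypePerm (key_iff huv s.2.2),
        fwd_ham huv h3 s.2.1 s.2.2⟩
      invFun := fun t => ⟨Equiv.Perm.ofSubtype t.1 * Equiv.swap u v,
        (bwd_ham huv hA t.2).1, (bwd_ham huv hA t.2).2⟩
      left_inv := ?_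
      right_inv := ?_ }
  · rintro ⟨σ, hσ, hσu⟩
    ext x
    simp only [Subtype.mk.injEq]
    rw [mul_apply]
    rcases eq_or_ne x u with rfl | hxu
    · rw [Equiv.swap_apply_left]
      rw [Equiv.Perm.ofSubtype_apply_of_not_mem _ (by simp)]
      exact hσu.symm
    · have hxswap : Equiv.swap u v x ≠ v := fun h =>
        hxu ((Equiv.swap u v).injective (h.trans (Equiv.swap_apply_left u v).symm))
      rw [Equiv.Perm.ofSubtype_apply_of_mem (p := fun y => y ≠ v)
        ((σ * Equiv.swap u v).subtypePerm (key_iff huv hσu)) hxswap]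
      simp only [subtypePerm_apply, mul_apply]
      congr 1
      exact Equiv.swap_apply_self u v x
  · rintro ⟨τ, hτ⟩
    ext ⟨x, hxv⟩
    simp only [subtypePerm_apply, mul_apply, Subtype.mk.injEq]
    rw [Equiv.swap_apply_self]
    rw [Equiv.Perm.ofSubtype_apply_of_mem τ hxv]
end

section
/- Let V be a finite type with at least 3 elements, let A : V → V → Prop be a directed graph on V, and let u, v ∈ V be distinct with A u v. Suppose that either v is the unique out-neighbor of u (for all w, A u w implies w = v) or u is the unique in-neighbor of v (for all w, A w v implies w = u). Then (V, A) has a Hamiltonian cycle if and only if the simplification of (V, A) over the edge (u, v) has a Hamiltonian cycle. -/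
private lemma cycle_univ_iff {V : Type*} [Fintype V] [DecidableEq V] [Nonempty V]
    (σ : Equiv.Perm V) :
    (σ.IsCycle ∧ σ.support = Finset.univ) ↔
      ((∀ x, σ x ≠ x) ∧ ∀ x y, σ.SameCycle x y) := by
  constructor
  · rintro ⟨hc, hs⟩
    have hmove : ∀ x, σ x ≠ x := fun x =>
      Equiv.Perm.mem_support.mp (hs ▸ Finset.mem_univ x)
    exact ⟨hmove, fun x y => hc.sameCycle (hmove x) (hmove y)⟩
  · rintro ⟨hmove, hsc⟩
    refine ⟨⟨Classical.arbitrary V, hmove _, fun y _ => hsc _ y⟩, ?_⟩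
    ext x
    simp [Equiv.Perm.mem_support, hmove x]

/-- Key pointwise and orbit facts about inserting the vertex `v` into the cycle
`τ'` right after `u` (equivalently, deleting `v` from `σ`). -/
private lemma key_insert {V : Type*} [Fintype V] [DecidableEq V]
    (τ' σ : Equiv.Perm V) (u v : V) (huv : u ≠ v) (hv : τ' v = v)
    (hσ : σ = Equiv.swap v (τ' u) * τ') :
    σ u = v ∧ σ v = τ' u ∧ (∀ x, x ≠ u → x ≠ v → σ x = τ' x) ∧
      ∀ x, x ≠ v → (τ'.SameCycle u x ↔ σ.SameCycle u x) := by
  have hσu : σ u = v := by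
    rw [hσ]; simp [Equiv.Perm.mul_apply, Equiv.swap_apply_right]
  have hσv : σ v = τ' u := by
    rw [hσ]; simp [Equiv.Perm.mul_apply, hv, Equiv.swap_apply_left]
  have hσx : ∀ x, x ≠ u → x ≠ v → σ x = τ' x := by
    intro x hxu hxv
    rw [hσ]; simp only [Equiv.Perm.mul_apply]
    apply Equiv.swap_apply_of_ne_of_ne
    · exact fun h => hxv (τ'.injective (h.trans hv.symm))
    · exact fun h => hxu (τ'.injective h)
  refine ⟨hσu, hσv, hσx, fun x hxv => ⟨?_, ?_⟩⟩
  · -- insertion direction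
    intro hx
    have aux : ∀ k : ℕ, σ.SameCycle u ((τ' ^ k) u) := by
      intro k
      induction k with
      | zero => simpa using Equiv.Perm.SameCycle.refl σ u
      | succ k ih =>
        rw [pow_succ', Equiv.Perm.mul_apply]
        by_cases hku : (τ' ^ k) u = u
        · rw [hku]
          have h2 : τ' u = σ (σ u) := by rw [hσu, hσv]
          rw [h2]
          exact ((Equiv.Perm.SameCycle.refl σ u).apply_right).apply_right
        · have hkv : (τ' ^ k) u ≠ v := by
            intro h
            have hvfix : (τ' ^ k) v = v :=
              Equiv.Perm.pow_apply_eq_self_of_apply_eq_self hv k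
            exact huv ((τ' ^ k).injective (h.trans hvfix.symm))
          rw [← hσx _ hku hkv]
          exact ih.apply_right
    obtain ⟨k, -, hk⟩ := hx.exists_pow_eq'
    exact hk ▸ aux k
  · -- deletion direction
    intro hx
    have aux : ∀ k : ℕ, (σ ^ k) u = v ∨ τ'.SameCycle u ((σ ^ k) u) := by
      intro k
      induction k with
      | zero => right; simpa using Equiv.Perm.SameCycle.refl τ' u
      | succ k ih =>
        rw [pow_succ', Equiv.Perm.mul_apply]
        by_cases hkv : (σ ^ k) u = v
        · rw [hkv, hσv]
          exact Or.inr (Equiv.Perm.SameCycle.refl τ' u).apply_right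
        · rcases ih with h | hsc
          · exact absurd h hkv
          · by_cases hku : (σ ^ k) u = u
            · left; rw [hku, hσu]
            · right
              rw [hσx _ hku hkv]
              exact hsc.apply_right
    obtain ⟨k, -, hk⟩ := hx.exists_pow_eq'
    rcases aux k with h | h
    · exact absurd (hk ▸ h : x = v) hxv
    · exact hk ▸ h

theorem hamiltonian_iff_simplify_hamiltonian {V : Type*} [Fintype V] [DecidableEq V]
    (A : V → V → Prop) (u v : V) (huv : u ≠ v) (hA : A u v)
    (h3 : 3 ≤ Fintype.card V)
    (hforced : (∀ w, A u w → w = v) ∨ (∀ w, A w v → w = u)) :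
    (∃ σ : Equiv.Perm V, IsHamiltonianCycle A σ) ↔
      (∃ τ : Equiv.Perm {x : V // x ≠ v}, IsHamiltonianCycle (Simplify A u v) τ) := by
  have hne : Nonempty V := ⟨u⟩
  have hne' : Nonempty {x : V // x ≠ v} := ⟨⟨u, huv⟩⟩
  constructor
  · rintro ⟨σ, hc, hs, he⟩
    obtain ⟨hmove, hsc⟩ := (cycle_univ_iff σ).mp ⟨hc, hs⟩
    have hσu : σ u = v := by
      rcases hforced with h | h
      · exact h _ (he u)
      · have h1 : σ.symm v = u := h _ (by simpa using he (σ.symm v))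
        rw [← h1]; exact σ.apply_symm_apply v
    have hvu : σ v ≠ u := by
      intro hvu
      obtain ⟨w, hwu, hwv⟩ : ∃ w, w ≠ u ∧ w ≠ v := by
        by_contra hcon
        push_neg at hcon
        have hsub : (Finset.univ : Finset V) ⊆ {u, v} := by
          intro w _
          rcases eq_or_ne w u with rfl | hw
          · simp
          · simp [hcon w hw]
        have h1 := Finset.card_le_card hsub
        rw [Finset.card_univ] at h1
        have h2 : ({u, v} : Finset V).card ≤ 2 := by
          apply le_trans (Finset.card_insert_le _ _)
          simp
        omega
      obtain ⟨k, -, hk⟩ := (hsc u w).exists_pow_eq'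
      have horb : ∀ n : ℕ, (σ ^ n) u = u ∨ (σ ^ n) u = v := by
        intro n
        induction n with
        | zero => left; simp
        | succ n ih =>
          rw [pow_succ', Equiv.Perm.mul_apply]
          rcases ih with h | h <;> rw [h]
          · right; exact hσu
          · left; exact hvu
      rcases horb k with h | h <;> rw [hk] at h
      · exact hwu h
      · exact hwv h
    set ρ := Equiv.swap v (σ v) * σ with hρ
    have hρv : ρ v = v := by
      rw [hρ]; simp [Equiv.Perm.mul_apply, Equiv.swap_apply_right]
    have hρu : ρ u = σ v := by
      rw [hρ]; simp [Equiv.Perm.mul_apply, hσu, Equiv.swap_apply_left]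
    have hσeq : σ = Equiv.swap v (ρ u) * ρ := by
      rw [hρu, hρ, ← mul_assoc, Equiv.swap_mul_self, one_mul]
    obtain ⟨k1, k2, k3, k4⟩ := key_insert ρ σ u v huv hρv hσeq
    have hsub : ∀ x : V, x ≠ v ↔ ρ x ≠ v := by
      intro x
      constructor
      · exact fun h hx => h (ρ.injective (hx.trans hρv.symm))
      · intro h hx
        rw [hx, hρv] at h
        exact h rfl
    replace hsub : ∀ x : V, ρ x ≠ v ↔ x ≠ v := fun x => (hsub x).symm
    refine ⟨ρ.subtypePerm hsub, ?_⟩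
    have hmove' : ∀ a : {x : V // x ≠ v}, ρ.subtypePerm hsub a ≠ a := by
      intro a h
      have hval : ρ (a : V) = (a : V) := congrArg Subtype.val h
      rcases eq_or_ne (a : V) u with hau | hau
      · rw [hau, hρu] at hval
        exact hvu hval
      · rw [← k3 _ hau a.2] at hval
        exact hmove _ hval
    have hρsc : ∀ x, x ≠ v → ρ.SameCycle u x := fun x hx => (k4 x hx).mpr (hsc u x)
    have hsc' : ∀ a b : {x : V // x ≠ v},
        (ρ.subtypePerm hsub).SameCycle a b := by
      intro a b
      have hab : ρ.SameCycle (a : V) (b : V) :=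
        (hρsc _ a.2).symm.trans (hρsc _ b.2)
      obtain ⟨k, -, hk⟩ := hab.exists_pow_eq'
      refine ⟨(k : ℤ), ?_⟩
      rw [zpow_natCast, Equiv.Perm.subtypePerm_pow]
      exact Subtype.ext hk
    obtain ⟨hcyc, hsupp⟩ := (cycle_univ_iff (ρ.subtypePerm hsub)).mpr ⟨hmove', hsc'⟩
    refine ⟨hcyc, hsupp, ?_⟩
    intro a
    constructor
    · intro hau
      show A v (ρ (a : V))
      rw [hau, hρu]
      exact he v
    · intro hau
      show A (a : V) (ρ (a : V))
      rw [← k3 _ hau a.2]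
      exact he _
  · rintro ⟨τ, hc, hs, he⟩
    obtain ⟨hmove, hsc⟩ := (cycle_univ_iff τ).mp ⟨hc, hs⟩
    set τ' := Equiv.Perm.ofSubtype τ with hτ'
    have hv' : τ' v = v :=
      Equiv.Perm.ofSubtype_apply_of_not_mem τ (not_not_intro rfl)
    have happ : ∀ (x : V) (hx : x ≠ v), τ' x = (τ ⟨x, hx⟩ : V) := fun x hx =>
      Equiv.Perm.ofSubtype_apply_of_mem τ hx
    set σ := Equiv.swap v (τ' u) * τ' with hσdef
    obtain ⟨k1, k2, k3, k4⟩ := key_insert τ' σ u v huv hv' hσdef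
    refine ⟨σ, ?_⟩
    have hσmove : ∀ x, σ x ≠ x := by
      intro x
      rcases eq_or_ne x v with rfl | hxv
      · rw [k2, happ u huv]
        exact (τ ⟨u, huv⟩).2
      rcases eq_or_ne x u with rfl | hxu
      · rw [k1]; exact Ne.symm huv
      · rw [k3 x hxu hxv, happ x hxv]
        intro h
        exact hmove ⟨x, hxv⟩ (Subtype.ext h)
    have hτ'sc : ∀ x, x ≠ v → τ'.SameCycle u x := by
      intro x hx
      obtain ⟨k, -, hk⟩ := (hsc ⟨u, huv⟩ ⟨x, hx⟩).exists_pow_eq'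
      refine ⟨(k : ℤ), ?_⟩
      rw [zpow_natCast]
      have hpow : τ' ^ k = Equiv.Perm.ofSubtype (τ ^ k) :=
        (map_pow (Equiv.Perm.ofSubtype) τ k).symm
      rw [hpow, Equiv.Perm.ofSubtype_apply_of_mem (τ ^ k) huv, hk]
    have hσsc : ∀ x y, σ.SameCycle x y := by
      have root : ∀ x, σ.SameCycle u x := by
        intro x
        rcases eq_or_ne x v with rfl | hx
        · exact ⟨1, by simpa using k1⟩
        · exact (k4 x hx).mp (hτ'sc x hx)
      exact fun x y => (root x).symm.trans (root y)
    obtain ⟨hcyc, hsupp⟩ := (cycle_univ_iff σ).mpr ⟨hσmove, hσsc⟩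
    refine ⟨hcyc, hsupp, ?_⟩
    intro w
    rcases eq_or_ne w v with rfl | hwv
    · rw [k2, happ u huv]
      exact (he ⟨u, huv⟩).1 rfl
    rcases eq_or_ne w u with rfl | hwu
    · rw [k1]; exact hA
    · rw [k3 w hwu hwv, happ w hwv]
      exact (he ⟨w, hwv⟩).2 hwu
end
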